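/- Let K routes have lengths l_1, ..., l_K, with pick-up points c_{k,1}, ..., c_{k,l_k}, strictly increasing arrival times t_{k,1} < ... < t_{k,l_k}, rates λ_c ≥ 0, and outcome probabilities p(u) defined via the time-varying pick-up probabilities P(c, Δ) = 1 - exp(-λ_c · Δ) with outcome-dependent intervals Δ_{k,v}(u). Then the sum of p(u) over all outcomes u ∈ ∏_{k=1}^{K} {1, ..., l_k + 1} equals 1. -/

import Mathlib

/-!
CMSR setup for the time-varying outcome probabilities.

Each pick-up point `x : C` carries a passenger-arrival rate `lam x ≥ 0`, and the
pick-up probability after an inter-arrival interval `Δ` is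
`P(x, Δ) = 1 - exp (-(lam x * Δ))`.

A recommendation for `K` taxicabs is encoded by lengths `l : Fin K → ℕ`, points
`c : Fin K → ℕ → C` and arrival times `t : Fin K → ℕ → ℝ`; route `k` visits
`c k 1, ..., c k (l k)` at strictly increasing times `t k 1 < ... < t k (l k)`.

An outcome is a vector `u` with `1 ≤ u k ≤ l k + 1`.  Given an outcome `u`, the
interval `Δ_{k,v}(u)` is `t k v` minus the largest arrival time `t k' v'` over tuples
`(k', v')` with `1 ≤ v' ≤ l k'`, `v' ≤ u k'` (taxicab `k'` is still cruising at `v'`),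
`c k' v' = c k v`, and either `t k' v' < t k v`, or `t k' v' = t k v` and `k' < k`;
if no such tuple exists, `Δ_{k,v}(u) = t k v`.

The outcome probability is
`p(u) = ∏_k (∏_{v=1}^{u k - 1} (1 - P(c_{k,v}, Δ_{k,v}(u))))
          * (P(c_{k,u_k}, Δ_{k,u_k}(u)) if u k ≤ l k else 1)`.
-/

/-- Pick-up probability at a point of rate `lam` after an interval `Δ`. -/
noncomputable def pickProb (lam : ℝ) (Δ : ℝ) : ℝ := 1 - Real.exp (-(lam * Δ))

open scoped Classical in
/-- The arrival time of the last still-cruising taxicab to visit the point `c k v`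
strictly before (in the time-then-index order) taxicab `k` reaches its `v`-th point,
given outcome `u`; it is `0` if no such visit exists. -/
noncomputable def prevVisitTime {C : Type*} {K : ℕ} (l : Fin K → ℕ) (c : Fin K → ℕ → C)
    (t : Fin K → ℕ → ℝ) (u : Fin K → ℕ) (k : Fin K) (v : ℕ) : ℝ :=
  let S : Finset (Fin K × ℕ) :=
    (Finset.univ ×ˢ Finset.Icc 1 (Finset.univ.sup l)).filter
      (fun kv => kv.2 ≤ l kv.1 ∧ kv.2 ≤ u kv.1 ∧ c kv.1 kv.2 = c k v ∧
        (t kv.1 kv.2 < t k v ∨ (t kv.1 kv.2 = t k v ∧ kv.1 < k)))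
  if h : S.Nonempty then S.sup' h (fun kv => t kv.1 kv.2) else 0

/-- The inter-arrival interval `Δ_{k,v}(u)` at the `v`-th point of route `k`
under outcome `u`. -/
noncomputable def interArrival {C : Type*} {K : ℕ} (l : Fin K → ℕ) (c : Fin K → ℕ → C)
    (t : Fin K → ℕ → ℝ) (u : Fin K → ℕ) (k : Fin K) (v : ℕ) : ℝ :=
  t k v - prevVisitTime l c t u k v

/-- The probability `p(u)` of outcome `u` for the recommendation `(l, c, t)`. -/
noncomputable def outcomeProb {C : Type*} {K : ℕ} (lam : C → ℝ) (l : Fin K → ℕ)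
    (c : Fin K → ℕ → C) (t : Fin K → ℕ → ℝ) (u : Fin K → ℕ) : ℝ :=
  ∏ k : Fin K,
    ((∏ v ∈ Finset.Icc 1 (u k - 1),
        (1 - pickProb (lam (c k v)) (interArrival l c t u k v))) *
      (if u k ≤ l k then pickProb (lam (c k (u k))) (interArrival l c t u k (u k))
        else 1))

section CMSRAux

open scoped Classical

lemma prevVisitTime_congr {C : Type*} {K : ℕ} {l l₂ : Fin K → ℕ} (c : Fin K → ℕ → C)
    (t : Fin K → ℕ → ℝ) {u u₂ : Fin K → ℕ} (k : Fin K) (v : ℕ)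
    (h : ∀ k' v', 1 ≤ v' →
      ((v' ≤ l k' ∧ v' ≤ u k' ∧ c k' v' = c k v ∧
          (t k' v' < t k v ∨ (t k' v' = t k v ∧ k' < k))) ↔
       (v' ≤ l₂ k' ∧ v' ≤ u₂ k' ∧ c k' v' = c k v ∧
          (t k' v' < t k v ∨ (t k' v' = t k v ∧ k' < k))))) :
    prevVisitTime l c t u k v = prevVisitTime l₂ c t u₂ k v := by
  have hS : ((Finset.univ ×ˢ Finset.Icc 1 (Finset.univ.sup l)).filter
      (fun kv : Fin K × ℕ => kv.2 ≤ l kv.1 ∧ kv.2 ≤ u kv.1 ∧ c kv.1 kv.2 = c k v ∧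
        (t kv.1 kv.2 < t k v ∨ (t kv.1 kv.2 = t k v ∧ kv.1 < k)))) =
      ((Finset.univ ×ˢ Finset.Icc 1 (Finset.univ.sup l₂)).filter
      (fun kv : Fin K × ℕ => kv.2 ≤ l₂ kv.1 ∧ kv.2 ≤ u₂ kv.1 ∧ c kv.1 kv.2 = c k v ∧
        (t kv.1 kv.2 < t k v ∨ (t kv.1 kv.2 = t k v ∧ kv.1 < k)))) := by
    ext ⟨k', v'⟩
    simp only [Finset.mem_filter, Finset.mem_product, Finset.mem_univ, Finset.mem_Icc, true_and]
    constructor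
    · rintro ⟨⟨h1, h2⟩, hl, hu, hc, ho⟩
      obtain ⟨hl2, hu2, hc2, ho2⟩ := (h k' v' h1).mp ⟨hl, hu, hc, ho⟩
      exact ⟨⟨h1, le_trans hl2 (Finset.le_sup (Finset.mem_univ k'))⟩, hl2, hu2, hc2, ho2⟩
    · rintro ⟨⟨h1, h2⟩, hl, hu, hc, ho⟩
      obtain ⟨hl2, hu2, hc2, ho2⟩ := (h k' v' h1).mpr ⟨hl, hu, hc, ho⟩
      exact ⟨⟨h1, le_trans hl2 (Finset.le_sup (Finset.mem_univ k'))⟩, hl2, hu2, hc2, ho2⟩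
  simp only [prevVisitTime]
  rw [hS]

lemma t_mono_cmsr {K : ℕ} {l : Fin K → ℕ} {t : Fin K → ℕ → ℝ}
    (ht : ∀ (k : Fin K) (v : ℕ), 1 ≤ v → v < l k → t k v < t k (v + 1))
    (k : Fin K) : ∀ v w, 1 ≤ v → v ≤ w → w ≤ l k → t k v ≤ t k w := by
  intro v w hv1 hvw hwl
  induction w with
  | zero => omega
  | succ w ih =>
    rcases Nat.eq_or_lt_of_le hvw with h | h
    · exact le_of_eq (by rw [h])
    · exact le_trans (ih (by omega) (by omega)) (le_of_lt (ht k w (by omega) (by omega)))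

lemma exists_max_event_cmsr {K : ℕ} {l : Fin K → ℕ} {t : Fin K → ℕ → ℝ}
    (ht : ∀ (k : Fin K) (v : ℕ), 1 ≤ v → v < l k → t k v < t k (v + 1))
    (hne : ∃ k, 1 ≤ l k) :
    ∃ k₀, 1 ≤ l k₀ ∧ ∀ (k : Fin K) (v : ℕ), 1 ≤ v → v ≤ l k →
      ¬(t k₀ (l k₀) < t k v ∨ (t k₀ (l k₀) = t k v ∧ k₀ < k)) := by
  obtain ⟨k₁, hk₁⟩ := hne
  set s : Finset (Fin K) := Finset.univ.filter (fun k => 1 ≤ l k) with hs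
  have hsne : s.Nonempty := ⟨k₁, by simp [hs, hk₁]⟩
  obtain ⟨k₀, hk₀s, hk₀max⟩ := Finset.exists_max_image s
    (fun k => toLex ((t k (l k), (k : ℕ)) : ℝ × ℕ)) hsne
  have hk₀l : 1 ≤ l k₀ := by simpa [hs] using hk₀s
  refine ⟨k₀, hk₀l, ?_⟩
  intro k v hv1 hvl
  have hks : k ∈ s := by simp [hs]; omega
  have hle := hk₀max k hks
  rw [Prod.Lex.le_iff] at hle
  have htv : t k v ≤ t k (l k) := t_mono_cmsr ht k v (l k) hv1 hvl le_rfl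
  rintro (h | ⟨heq, hlt⟩)
  · rcases hle with h' | ⟨h', _⟩
    · exact absurd (lt_trans h (lt_of_le_of_lt htv h')) (lt_irrefl _)
    · exact absurd (lt_of_lt_of_le h (htv.trans_eq h')) (lt_irrefl _)
  · rcases hle with h' | ⟨h', hk⟩
    · exact absurd (heq ▸ lt_of_le_of_lt htv h') (lt_irrefl _)
    · simp only [ofLex_toLex] at hk
      have hkk : k₀ < k := hlt
      rw [Fin.lt_def] at hkk
      omega

lemma interArrival_congr_cmsr {C : Type*} {K : ℕ} {l : Fin K → ℕ} (c : Fin K → ℕ → C)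
    (t : Fin K → ℕ → ℝ) {k₀ : Fin K} {m : ℕ} (hml : l k₀ = m) (hm : 1 ≤ m)
    (hmax : ∀ (k : Fin K) (v : ℕ), 1 ≤ v → v ≤ l k →
      ¬(t k₀ m < t k v ∨ (t k₀ m = t k v ∧ k₀ < k)))
    {u u' : Fin K → ℕ}
    (hcase : u = u' ∨ (u' k₀ = m ∧ u = Function.update u' k₀ (m + 1)))
    (k : Fin K) (v : ℕ) (hv1 : 1 ≤ v) (hv : v ≤ l k) :
    interArrival l c t u k v = interArrival (Function.update l k₀ (m - 1)) c t u' k v := by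
  unfold interArrival
  congr 1
  apply prevVisitTime_congr
  intro k' v' h1
  by_cases hkm : k' = k₀ ∧ v' = m
  · obtain ⟨rfl, rfl⟩ := hkm
    constructor
    · rintro ⟨_, _, _, ho⟩; exact absurd ho (hmax k v hv1 hv)
    · rintro ⟨_, _, _, ho⟩; exact absurd ho (hmax k v hv1 hv)
  · have hiff : (v' ≤ l k' ∧ v' ≤ u k') ↔
        (v' ≤ Function.update l k₀ (m - 1) k' ∧ v' ≤ u' k') := by
      by_cases hk' : k' = k₀
      · subst hk'
        rw [Function.update_self]
        have hvm : v' ≠ m := fun h => hkm ⟨rfl, h⟩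
        rcases hcase with rfl | ⟨hum, rfl⟩
        · rw [hml]; omega
        · rw [Function.update_self, hml, hum]; omega
      · rw [Function.update_of_ne hk']
        have huk : u k' = u' k' := by
          rcases hcase with rfl | ⟨_, rfl⟩
          · rfl
          · exact Function.update_of_ne hk' _ _
        rw [huk]
    constructor
    · rintro ⟨ha, hb, hc, hd⟩; exact ⟨(hiff.mp ⟨ha, hb⟩).1, (hiff.mp ⟨ha, hb⟩).2, hc, hd⟩
    · rintro ⟨ha, hb, hc, hd⟩; exact ⟨(hiff.mpr ⟨ha, hb⟩).1, (hiff.mpr ⟨ha, hb⟩).2, hc, hd⟩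

end CMSRAux

private lemma mul_congr_cmsr {a b c d : ℝ} (h1 : a = b) (h2 : c = d) : a * c = b * d := by
  rw [h1, h2]

lemma pointwise_cmsr {C : Type*} {K : ℕ} (lam : C → ℝ) {l : Fin K → ℕ} (c : Fin K → ℕ → C)
    (t : Fin K → ℕ → ℝ) {k₀ : Fin K} {m : ℕ} (hml : l k₀ = m) (hm : 1 ≤ m)
    (hmax : ∀ (k : Fin K) (v : ℕ), 1 ≤ v → v ≤ l k →
      ¬(t k₀ m < t k v ∨ (t k₀ m = t k v ∧ k₀ < k)))
    (u' : Fin K → ℕ)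
    (hu' : ∀ k, 1 ≤ u' k ∧ u' k ≤ Function.update l k₀ (m - 1) k + 1) :
    outcomeProb lam l c t u' +
      (if u' k₀ = m then outcomeProb lam l c t (Function.update u' k₀ (m + 1)) else 0) =
      outcomeProb lam (Function.update l k₀ (m - 1)) c t u' := by
  classical
  set l' := Function.update l k₀ (m - 1) with hl'def
  have hl'k₀ : l' k₀ = m - 1 := Function.update_self _ _ _
  -- factor equality for k ≠ k₀ in each scenario
  have hfac : ∀ (u : Fin K → ℕ),
      (u = u' ∨ (u' k₀ = m ∧ u = Function.update u' k₀ (m + 1))) →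
      ∀ k, k ≠ k₀ →
      ((∏ v ∈ Finset.Icc 1 (u k - 1),
          (1 - pickProb (lam (c k v)) (interArrival l c t u k v))) *
        (if u k ≤ l k then pickProb (lam (c k (u k))) (interArrival l c t u k (u k)) else 1)) =
      ((∏ v ∈ Finset.Icc 1 (u' k - 1),
          (1 - pickProb (lam (c k v)) (interArrival l' c t u' k v))) *
        (if u' k ≤ l' k then pickProb (lam (c k (u' k))) (interArrival l' c t u' k (u' k))
          else 1)) := by
    intro u hcase k hk
    have huk : u k = u' k := by
      rcases hcase with rfl | ⟨_, rfl⟩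
      · rfl
      · exact Function.update_of_ne hk _ _
    have hlk : l' k = l k := Function.update_of_ne hk _ _
    have hub : u' k ≤ l k + 1 := by have := (hu' k).2; rwa [hlk] at this
    rw [huk, hlk]
    refine mul_congr_cmsr ?_ ?_
    · apply Finset.prod_congr rfl
      intro v hv
      rw [Finset.mem_Icc] at hv
      rw [interArrival_congr_cmsr c t hml hm hmax hcase k v hv.1 (by omega)]
    · split_ifs with h
      · rw [interArrival_congr_cmsr c t hml hm hmax hcase k (u' k) (hu' k).1 h]
      · rfl
  -- interArrival agreement at k₀ for targets 1 ≤ v ≤ m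
  have hΔ : ∀ (u : Fin K → ℕ),
      (u = u' ∨ (u' k₀ = m ∧ u = Function.update u' k₀ (m + 1))) →
      ∀ v, 1 ≤ v → v ≤ m →
      interArrival l c t u k₀ v = interArrival l' c t u' k₀ v := fun u hcase v h1 h2 =>
    interArrival_congr_cmsr c t hml hm hmax hcase k₀ v h1 (by omega)
  -- split products at k₀
  have hsplit : ∀ (L : Fin K → ℕ) (u : Fin K → ℕ),
      outcomeProb lam L c t u =
      ((∏ v ∈ Finset.Icc 1 (u k₀ - 1),
          (1 - pickProb (lam (c k₀ v)) (interArrival L c t u k₀ v))) *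
        (if u k₀ ≤ L k₀ then pickProb (lam (c k₀ (u k₀))) (interArrival L c t u k₀ (u k₀))
          else 1)) *
      ∏ k ∈ Finset.univ.erase k₀,
        ((∏ v ∈ Finset.Icc 1 (u k - 1),
            (1 - pickProb (lam (c k v)) (interArrival L c t u k v))) *
          (if u k ≤ L k then pickProb (lam (c k (u k))) (interArrival L c t u k (u k))
            else 1)) := by
    intro L u
    rw [outcomeProb, ← Finset.mul_prod_erase Finset.univ _ (Finset.mem_univ k₀)]
  have hrest : ∀ (u : Fin K → ℕ),
      (u = u' ∨ (u' k₀ = m ∧ u = Function.update u' k₀ (m + 1))) →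
      (∏ k ∈ Finset.univ.erase k₀,
        ((∏ v ∈ Finset.Icc 1 (u k - 1),
            (1 - pickProb (lam (c k v)) (interArrival l c t u k v))) *
          (if u k ≤ l k then pickProb (lam (c k (u k))) (interArrival l c t u k (u k))
            else 1))) =
      (∏ k ∈ Finset.univ.erase k₀,
        ((∏ v ∈ Finset.Icc 1 (u' k - 1),
            (1 - pickProb (lam (c k v)) (interArrival l' c t u' k v))) *
          (if u' k ≤ l' k then pickProb (lam (c k (u' k))) (interArrival l' c t u' k (u' k))
            else 1))) := by
    intro u hcase
    apply Finset.prod_congr rfl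
    intro k hk
    exact hfac u hcase k (Finset.ne_of_mem_erase hk)
  by_cases hcase₀ : u' k₀ = m
  · rw [if_pos hcase₀]
    set u₂ := Function.update u' k₀ (m + 1) with hu₂def
    have hc1 : u' = u' ∨ (u' k₀ = m ∧ u' = u₂) := Or.inl rfl
    have hc2 : u₂ = u' ∨ (u' k₀ = m ∧ u₂ = u₂) := Or.inr ⟨hcase₀, rfl⟩
    rw [hsplit l u', hsplit l u₂, hsplit l' u', hrest u' hc1, hrest u₂ hc2]
    have hu₂k₀ : u₂ k₀ = m + 1 := Function.update_self _ _ _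
    -- k₀ factor of scenario u'
    have hA : (∏ v ∈ Finset.Icc 1 (u' k₀ - 1),
          (1 - pickProb (lam (c k₀ v)) (interArrival l c t u' k₀ v))) =
        ∏ v ∈ Finset.Icc 1 (m - 1),
          (1 - pickProb (lam (c k₀ v)) (interArrival l' c t u' k₀ v)) := by
      rw [hcase₀]
      apply Finset.prod_congr rfl
      intro v hv
      rw [Finset.mem_Icc] at hv
      rw [hΔ u' hc1 v hv.1 (by omega)]
    have hB : (∏ v ∈ Finset.Icc 1 (u₂ k₀ - 1),
          (1 - pickProb (lam (c k₀ v)) (interArrival l c t u₂ k₀ v))) =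
        (∏ v ∈ Finset.Icc 1 (m - 1),
          (1 - pickProb (lam (c k₀ v)) (interArrival l' c t u' k₀ v))) *
        (1 - pickProb (lam (c k₀ m)) (interArrival l' c t u' k₀ m)) := by
      rw [hu₂k₀, Nat.add_sub_cancel]
      have hmm : m = (m - 1) + 1 := by omega
      rw [hmm, Finset.prod_Icc_succ_top (by omega), ← hmm]
      refine mul_congr_cmsr ?_ ?_
      · apply Finset.prod_congr rfl
        intro v hv
        rw [Finset.mem_Icc] at hv
        rw [hΔ u₂ hc2 v hv.1 (by omega)]
      · rw [hΔ u₂ hc2 m hm le_rfl]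
    rw [hA, hB]
    rw [if_pos (by rw [hcase₀, hml]), if_neg (by rw [hu₂k₀, hml]; omega),
      if_neg (by rw [hcase₀, hl'k₀]; omega)]
    rw [hcase₀, hΔ u' hc1 m hm le_rfl]
    ring
  · rw [if_neg hcase₀, add_zero]
    have hc1 : u' = u' ∨ (u' k₀ = m ∧ u' = Function.update u' k₀ (m + 1)) := Or.inl rfl
    rw [hsplit l u', hsplit l' u', hrest u' hc1]
    have hub : u' k₀ ≤ m - 1 := by
      have := (hu' k₀).2
      rw [hl'k₀] at this
      omega
    refine mul_congr_cmsr (mul_congr_cmsr ?_ ?_) rfl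
    · apply Finset.prod_congr rfl
      intro v hv
      rw [Finset.mem_Icc] at hv
      rw [hΔ u' hc1 v hv.1 (by omega)]
    · rw [if_pos (by omega : u' k₀ ≤ l k₀), if_pos (by rw [hl'k₀]; omega)]
      rw [hΔ u' hc1 (u' k₀) (hu' k₀).1 (by omega)]

/-- time-varying CMSR outcome probabilities sum to one.
Let `K` routes have lengths `l k`, pick-up points `c k 1, ..., c k (l k)`, strictly
increasing arrival times `t k 1 < ... < t k (l k)`, rates `lam x ≥ 0`, and outcome
probabilities `p(u)` defined via `P(x, Δ) = 1 - exp (-(lam x * Δ))` with the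
outcome-dependent intervals `Δ_{k,v}(u)`.  Then the sum of `p(u)` over all outcomes
`u ∈ ∏_k {1, ..., l k + 1}` equals `1`. -/
theorem cmsr_outcome_probabilities_sum_to_one {C : Type*} {K : ℕ}
    (lam : C → ℝ) (hlam : ∀ x, 0 ≤ lam x)
    (l : Fin K → ℕ) (c : Fin K → ℕ → C) (t : Fin K → ℕ → ℝ)
    (ht : ∀ (k : Fin K) (v : ℕ), 1 ≤ v → v < l k → t k v < t k (v + 1)) :
    ∑ u ∈ Fintype.piFinset (fun k => Finset.Icc 1 (l k + 1)),
      outcomeProb lam l c t u = 1 := by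
  classical
  suffices h : ∀ (n : ℕ) (l : Fin K → ℕ),
      (∀ (k : Fin K) (v : ℕ), 1 ≤ v → v < l k → t k v < t k (v + 1)) →
      ∑ k, l k = n →
      ∑ u ∈ Fintype.piFinset (fun k => Finset.Icc 1 (l k + 1)),
        outcomeProb lam l c t u = 1 by
    exact h (∑ k, l k) l ht rfl
  intro n
  induction n using Nat.strong_induction_on with
  | _ n ih =>
    intro l hht hsum
    by_cases hzero : ∀ k, l k = 0
    · have hpi : Fintype.piFinset (fun k : Fin K => Finset.Icc 1 (l k + 1)) =
          {fun _ => 1} := by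
        ext u
        simp only [Fintype.mem_piFinset, Finset.mem_Icc, Finset.mem_singleton, funext_iff,
          hzero]
        constructor
        · intro h k; have := h k; omega
        · intro h k; have := h k; omega
      rw [hpi, Finset.sum_singleton]
      have : ∀ k : Fin K, ((∏ v ∈ Finset.Icc 1 ((fun _ : Fin K => 1) k - 1),
          (1 - pickProb (lam (c k v)) (interArrival l c t (fun _ => 1) k v))) *
        (if (fun _ : Fin K => 1) k ≤ l k then
          pickProb (lam (c k ((fun _ : Fin K => 1) k)))
            (interArrival l c t (fun _ => 1) k ((fun _ : Fin K => 1) k)) else 1)) = 1 := by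
        intro k
        simp [hzero k]
      rw [outcomeProb, Finset.prod_congr rfl (fun k _ => this k), Finset.prod_const_one]
    · push_neg at hzero
      obtain ⟨k₁, hk₁⟩ := hzero
      obtain ⟨k₀, hk₀l, hmax⟩ := exists_max_event_cmsr hht ⟨k₁, by omega⟩
      set m := l k₀ with hm_def
      have hml : l k₀ = m := rfl
      have hm : 1 ≤ m := hk₀l
      set l' := Function.update l k₀ (m - 1) with hl'def
      have hl'k₀ : l' k₀ = m - 1 := Function.update_self _ _ _
      have hl'k : ∀ k, k ≠ k₀ → l' k = l k := fun k hk => Function.update_of_ne hk _ _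
      have hht' : ∀ (k : Fin K) (v : ℕ), 1 ≤ v → v < l' k → t k v < t k (v + 1) := by
        intro k v h1 h2
        by_cases hk : k = k₀
        · subst hk; rw [hl'k₀] at h2; exact hht k v h1 (by omega)
        · rw [hl'k k hk] at h2; exact hht k v h1 h2
      have hsum0 : ∑ k, l k = m + ∑ k ∈ Finset.univ.erase k₀, l k := by
        rw [← Finset.add_sum_erase Finset.univ l (Finset.mem_univ k₀)]
      have hsum' : ∑ k, l' k = n - 1 := by
        rw [hl'def, Finset.sum_update_of_mem (Finset.mem_univ k₀),
          Finset.sdiff_singleton_eq_erase]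
        omega
      have hn1 : 1 ≤ n := by omega
      -- split the sum
      rw [← Finset.sum_filter_add_sum_filter_not
        (Fintype.piFinset (fun k => Finset.Icc 1 (l k + 1))) (fun u => u k₀ ≤ m)]
      have step1 : (Fintype.piFinset (fun k => Finset.Icc 1 (l k + 1))).filter
          (fun u => u k₀ ≤ m) =
          Fintype.piFinset (fun k => Finset.Icc 1 (l' k + 1)) := by
        ext u
        simp only [Finset.mem_filter, Fintype.mem_piFinset, Finset.mem_Icc]
        constructor
        · rintro ⟨h1, h2⟩ k
          rcases eq_or_ne k k₀ with rfl | hk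
          · refine ⟨(h1 k).1, by rw [hl'k₀]; omega⟩
          · rw [hl'k k hk]; exact h1 k
        · intro h1
          refine ⟨fun k => ?_, ?_⟩
          · rcases eq_or_ne k k₀ with rfl | hk
            · have := h1 k; rw [hl'k₀] at this; exact ⟨this.1, by omega⟩
            · rw [← hl'k k hk]; exact h1 k
          · have := h1 k₀; rw [hl'k₀] at this; omega
      have step2 : ∑ u ∈ (Fintype.piFinset (fun k => Finset.Icc 1 (l k + 1))).filter
            (fun u => ¬ u k₀ ≤ m), outcomeProb lam l c t u =
          ∑ u' ∈ (Fintype.piFinset (fun k => Finset.Icc 1 (l' k + 1))).filter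
            (fun u' => u' k₀ = m),
            outcomeProb lam l c t (Function.update u' k₀ (m + 1)) := by
        apply Finset.sum_nbij' (i := fun u => Function.update u k₀ m)
          (j := fun u' => Function.update u' k₀ (m + 1))
        · intro u hu
          rw [Finset.mem_filter, Fintype.mem_piFinset] at hu
          obtain ⟨h1, h2⟩ := hu
          rw [Finset.mem_filter, Fintype.mem_piFinset]
          refine ⟨fun k => ?_, Function.update_self _ _ _⟩
          rcases eq_or_ne k k₀ with rfl | hk
          · rw [Function.update_self, Finset.mem_Icc, hl'k₀]; omega
          · rw [Function.update_of_ne hk, hl'k k hk]; exact h1 k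
        · intro u' hu'
          rw [Finset.mem_filter, Fintype.mem_piFinset] at hu'
          obtain ⟨h1, h2⟩ := hu'
          rw [Finset.mem_filter, Fintype.mem_piFinset]
          constructor
          · intro k
            rcases eq_or_ne k k₀ with rfl | hk
            · rw [Function.update_self, Finset.mem_Icc, hml]; omega
            · rw [Function.update_of_ne hk, ← hl'k k hk]; exact h1 k
          · rw [Function.update_self]; omega
        · intro u hu
          rw [Finset.mem_filter, Fintype.mem_piFinset] at hu
          obtain ⟨h1, h2⟩ := hu
          have huk : u k₀ = m + 1 := by
            have := h1 k₀; rw [Finset.mem_Icc, hml] at this; omega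
          rw [Function.update_idem, ← huk, Function.update_eq_self]
        · intro u' hu'
          rw [Finset.mem_filter] at hu'
          rw [Function.update_idem, ← hu'.2, Function.update_eq_self]
        · intro u hu
          rw [Finset.mem_filter, Fintype.mem_piFinset] at hu
          obtain ⟨h1, h2⟩ := hu
          have huk : u k₀ = m + 1 := by
            have := h1 k₀; rw [Finset.mem_Icc, hml] at this; omega
          rw [Function.update_idem, ← huk, Function.update_eq_self]
      rw [step1, step2, Finset.sum_filter, ← Finset.sum_add_distrib]
      have hpw : ∀ u' ∈ Fintype.piFinset (fun k => Finset.Icc 1 (l' k + 1)),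
          outcomeProb lam l c t u' +
            (if u' k₀ = m then outcomeProb lam l c t (Function.update u' k₀ (m + 1))
              else 0) = outcomeProb lam l' c t u' := by
        intro u' hu'
        rw [Fintype.mem_piFinset] at hu'
        refine pointwise_cmsr lam c t hml hm hmax u' (fun k => ?_)
        have := hu' k; rw [Finset.mem_Icc] at this; exact this
      rw [Finset.sum_congr rfl hpw]
      exact ih (n - 1) (by omega) l' hht' hsum'
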